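/- Subsequential convergence of quasi-minimising families of regularised solutions: Under the regularisation setting, let {x̃_ε}_{0<ε≤ε0} ⊆ X satisfy lim_{ε→0+} F_ε(x̃_ε) = lim_{ε→0+} min_X F_ε (for instance, x̃_ε may be chosen as a minimiser of F_ε). Then for every sequence {ε_n} of positive numbers with ε_n → 0, there is a subsequence along which x̃_{ε_n} converges in X to a point x̃ ∈ X which is a minimiser of F_0; in particular Λ(x̃) = Λ(x0) in Y and R(x̃) = min{ R(x) : x ∈ X, Λ(x) = Λ(x0) }. -/

import Mathlib

open Filter Topology

private lemma aux_mul_le (a : ℝ) (ha : 0 < a) {u v : EReal} (h : u ≤ v) :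
    (a : EReal) * u ≤ (a : EReal) * v :=
  mul_le_mul_of_nonneg_left h (by exact_mod_cast ha.le)

private lemma aux_cancel (a : ℝ) (ha : 0 < a) {u v : EReal}
    (h : (a : EReal) * u ≤ (a : EReal) * v) : u ≤ v := by
  have hpos : (0 : EReal) < (a : EReal) := by exact_mod_cast ha
  have hnt : (a : EReal) ≠ ⊤ := EReal.coe_ne_top a
  have key : ∀ w : EReal, ((a : EReal) * w) / (a : EReal) = w := by
    intro w
    rw [mul_comm, ← EReal.mul_div, EReal.div_self (EReal.coe_ne_bot a) hnt
      (by exact_mod_cast ha.ne'), mul_one]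
  have h2 := (EReal.strictMono_div_right_of_pos hpos hnt).monotone h
  simpa only [key] using h2

private lemma aux_div (a : ℝ) (ha : 0 < a) {u : EReal} {c : ℝ}
    (h : (a : EReal) * u ≤ (c : EReal)) : u ≤ ((c / a : ℝ) : EReal) := by
  apply aux_cancel a ha
  refine h.trans ?_
  rw [← EReal.coe_mul, (by field_simp : a * (c / a) = c)]

private lemma aux_bddBelow {X : Type*} [MetricSpace X] (R : X → EReal)
    (hRbot : ∀ x, R x ≠ ⊥) (hRlsc : LowerSemicontinuous R)
    (hRcompact : ∀ C : ℝ, 0 < C → IsCompact {x : X | R x ≤ (C : EReal)}) :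
    ∃ b : ℝ, b ≤ 0 ∧ ∀ x, (b : EReal) ≤ R x := by
  by_contra h
  push_neg at h
  set S : ℕ → Set X := fun n => {x : X | R x ≤ ((-(n : ℝ) : ℝ) : EReal)} with hS
  have hclosed : ∀ n, IsClosed (S n) := fun n => hRlsc.isClosed_preimage _
  have hsub : ∀ n, S n ⊆ {x : X | R x ≤ ((1 : ℝ) : EReal)} := by
    intro n x hx
    have hx' : R x ≤ ((-(n : ℝ) : ℝ) : EReal) := hx
    exact hx'.trans (by exact_mod_cast (by linarith [Nat.cast_nonneg (α := ℝ) n] : -(n:ℝ) ≤ 1))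
  have hcpt : ∀ n, IsCompact (S n) :=
    fun n => (hRcompact 1 one_pos).of_isClosed_subset (hclosed n) (hsub n)
  have hne : ∀ n, (S n).Nonempty := by
    intro n
    obtain ⟨x, hx⟩ := h (-(n : ℝ) - 1) (by linarith [Nat.cast_nonneg (α := ℝ) n])
    exact ⟨x, hx.le.trans (by exact_mod_cast (by linarith : -(n:ℝ) - 1 ≤ -(n:ℝ)))⟩
  have hdec : ∀ n, S (n + 1) ⊆ S n := by
    intro n x hx
    have hx' : R x ≤ ((-((n + 1 : ℕ) : ℝ) : ℝ) : EReal) := hx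
    refine hx'.trans ?_
    exact_mod_cast (by push_cast; linarith : -(((n:ℕ) + 1 : ℝ)) ≤ -(n:ℝ))
  obtain ⟨z, hz⟩ := IsCompact.nonempty_iInter_of_sequence_nonempty_isCompact_isClosed
    S hdec hne (hcpt 0) hclosed
  have hzn : ∀ n : ℕ, R z ≤ ((-(n : ℝ) : ℝ) : EReal) := by
    intro n
    exact Set.mem_iInter.1 hz n
  have hzt : R z ≠ ⊤ := by
    intro hT
    have := hzn 0
    rw [hT] at this
    exact absurd this (by simp)
  have hzr : (((R z).toReal : ℝ) : EReal) = R z := EReal.coe_toReal hzt (hRbot z)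
  obtain ⟨n, hn⟩ := exists_nat_gt (-(R z).toReal)
  have := hzn n
  rw [← hzr, EReal.coe_le_coe_iff] at this
  linarith

/-- Subsequential convergence of quasi-minimising families of regularised solutions:
if `x̃ ε` quasi-minimises `F ε` (namely `lim_{ε→0⁺} F ε (x̃ ε) = lim_{ε→0⁺} min_X F ε`),
then for every sequence of positive noise levels `εs n → 0` there is a subsequence along
which `x̃ (εs n)` converges to a minimiser `x̃lim` of `F0`; in particular
`Λ x̃lim = Λ x0` and `x̃lim` minimises `R` among solutions of `Λ x = Λ x0`. -/
theorem regularised_solutions_subsequential_convergence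
    {X Y : Type*} [MetricSpace X] [MetricSpace Y]
    (Λ : X → Y) (hΛ : Continuous Λ) (x0 : X)
    (R : X → EReal)
    (hRbot : ∀ x : X, R x ≠ ⊥)
    (hRnetop : ∃ x : X, R x ≠ ⊤)
    (hRlsc : LowerSemicontinuous R)
    (hRcompact : ∀ C : ℝ, 0 < C → IsCompact {x : X | R x ≤ (C : EReal)})
    (α γ a ε0 : ℝ)
    (hα : 0 < α) (hγ : 0 < γ) (hγα : γ < α) (ha : 0 < a) (hε0 : 0 < ε0)
    (Λε : ℝ → Y) (hΛε : ∀ ε : ℝ, 0 < ε → ε ≤ ε0 → dist (Λε ε) (Λ x0) ≤ ε)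
    (hR0 : R x0 ≠ ⊤)
    (F : ℝ → X → EReal)
    (hF : ∀ ε : ℝ, 0 < ε → ε ≤ ε0 → ∀ x : X,
      F ε x = ((dist (Λ x) (Λε ε) ^ α / ε ^ γ : ℝ) : EReal) + (a : EReal) * R x)
    (F0 : X → EReal)
    (hF0eq : ∀ x : X, Λ x = Λ x0 → F0 x = (a : EReal) * R x)
    (hF0top : ∀ x : X, Λ x ≠ Λ x0 → F0 x = ⊤)
    (xt : ℝ → X) (m : EReal)
    (hxt : Tendsto (fun ε : ℝ => F ε (xt ε)) (𝓝[>] (0 : ℝ)) (𝓝 m))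
    (hmin : Tendsto (fun ε : ℝ => ⨅ x : X, F ε x) (𝓝[>] (0 : ℝ)) (𝓝 m))
    (εs : ℕ → ℝ) (hεs : ∀ n : ℕ, 0 < εs n ∧ εs n ≤ ε0)
    (hεslim : Tendsto εs atTop (𝓝 0)) :
    ∃ φ : ℕ → ℕ, StrictMono φ ∧ ∃ xtlim : X,
      Tendsto (fun k => xt (εs (φ k))) atTop (𝓝 xtlim) ∧
      (∀ x : X, F0 xtlim ≤ F0 x) ∧
      Λ xtlim = Λ x0 ∧
      (∀ x : X, Λ x = Λ x0 → R xtlim ≤ R x) := by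
  obtain ⟨b, hb0, hbR⟩ := aux_bddBelow R hRbot hRlsc hRcompact
  -- rpow tendsto helper
  have hrpow : ∀ p : ℝ, 0 < p → Tendsto (fun ε : ℝ => ε ^ p) (𝓝[>] (0 : ℝ)) (𝓝 0) := by
    intro p hp
    have h1 : ContinuousAt (fun x : ℝ => x ^ p) 0 :=
      Real.continuousAt_rpow_const 0 p (Or.inr hp.le)
    have h2 : Tendsto (fun x : ℝ => x ^ p) (𝓝[>] (0 : ℝ)) (𝓝 ((0:ℝ) ^ p)) :=
      h1.tendsto.mono_left nhdsWithin_le_nhds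
    rwa [Real.zero_rpow hp.ne'] at h2
  have hIoc : ∀ᶠ ε in 𝓝[>] (0 : ℝ), ε ∈ Set.Ioc (0 : ℝ) ε0 :=
    Ioc_mem_nhdsGT hε0
  -- m ≤ a * R x for every x with Λ x = Λ x0
  have hm_le : ∀ x : X, Λ x = Λ x0 → m ≤ (a : EReal) * R x := by
    intro x hx
    rcases eq_or_ne (R x) ⊤ with hT | hT
    · rw [hT, EReal.mul_top_of_pos (by exact_mod_cast ha)]
      exact le_top
    have hrx : (((R x).toReal : ℝ) : EReal) = R x := EReal.coe_toReal hT (hRbot x)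
    set r := (R x).toReal with hrdef
    have hg : Tendsto (fun ε : ℝ => ((ε ^ (α - γ) + a * r : ℝ) : EReal)) (𝓝[>] (0 : ℝ))
        (𝓝 ((a * r : ℝ) : EReal)) := by
      rw [EReal.tendsto_coe]
      have := (hrpow (α - γ) (by linarith)).add_const (a * r)
      simpa using this
    have hev : ∀ᶠ ε in 𝓝[>] (0 : ℝ), (⨅ y : X, F ε y) ≤ ((ε ^ (α - γ) + a * r : ℝ) : EReal) := by
      filter_upwards [hIoc] with ε hε
      obtain ⟨hε1, hε2⟩ := hε
      have hεγ : (0 : ℝ) < ε ^ γ := Real.rpow_pos_of_pos hε1 γ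
      have hdist : dist (Λ x) (Λε ε) ≤ ε := by
        rw [hx, dist_comm]; exact hΛε ε hε1 hε2
      have h1 : dist (Λ x) (Λε ε) ^ α ≤ ε ^ α := Real.rpow_le_rpow dist_nonneg hdist hα.le
      have h2 : dist (Λ x) (Λε ε) ^ α / ε ^ γ ≤ ε ^ (α - γ) := by
        rw [Real.rpow_sub hε1]
        exact (div_le_div_iff_of_pos_right hεγ).mpr h1
      calc (⨅ y : X, F ε y) ≤ F ε x := iInf_le _ x
        _ = ((dist (Λ x) (Λε ε) ^ α / ε ^ γ : ℝ) : EReal) + (a : EReal) * R x := hF ε hε1 hε2 x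
        _ ≤ ((ε ^ (α - γ) : ℝ) : EReal) + (a : EReal) * R x :=
            add_le_add_left (EReal.coe_le_coe_iff.mpr h2) _
        _ = ((ε ^ (α - γ) + a * r : ℝ) : EReal) := by
            rw [← hrx, ← EReal.coe_mul, ← EReal.coe_add]
    have h3 := le_of_tendsto_of_tendsto hmin hg hev
    rwa [EReal.coe_mul, hrx] at h3
  -- lower bound for m
  have hm_ge : ((a * b : ℝ) : EReal) ≤ m := by
    refine ge_of_tendsto hmin ?_
    filter_upwards [hIoc] with ε hε
    refine le_iInf fun x => ?_
    rw [hF ε hε.1 hε.2 x]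
    have h1 : ((a * b : ℝ) : EReal) ≤ (a : EReal) * R x := by
      rw [EReal.coe_mul]; exact aux_mul_le a ha (hbR x)
    refine h1.trans (le_add_of_nonneg_left ?_)
    exact_mod_cast div_nonneg (Real.rpow_nonneg dist_nonneg α) (Real.rpow_nonneg hε.1.le γ)
  have hm0 : m ≤ ((a * (R x0).toReal : ℝ) : EReal) := by
    have h4 := hm_le x0 rfl
    rwa [← EReal.coe_toReal hR0 (hRbot x0), ← EReal.coe_mul] at h4
  have hmtop : m ≠ ⊤ := (lt_of_le_of_lt hm0 (EReal.coe_lt_top _)).ne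
  have hmbot : m ≠ ⊥ := ((EReal.bot_lt_coe _).trans_le hm_ge).ne'
  set mr := m.toReal with hmrdef
  have hmr : (mr : EReal) = m := EReal.coe_toReal hmtop hmbot
  set M : ℝ := mr + 1 - a * b with hMdef
  -- key eventual bounds
  have hkey : ∀ᶠ ε in 𝓝[>] (0 : ℝ), R (xt ε) ≤ (((mr + 1) / a : ℝ) : EReal) ∧
      dist (Λ (xt ε)) (Λ x0) ≤ (M * ε ^ γ) ^ (1 / α) + ε := by
    have h2 : ∀ᶠ ε in 𝓝[>] (0 : ℝ), F ε (xt ε) < ((mr + 1 : ℝ) : EReal) :=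
      hxt.eventually_lt_const (by rw [← hmr]; exact_mod_cast lt_add_one mr)
    filter_upwards [hIoc, h2] with ε hε hFlt
    obtain ⟨hε1, hε2⟩ := hε
    set d := dist (Λ (xt ε)) (Λε ε) with hd
    have hFx : F ε (xt ε) = ((d ^ α / ε ^ γ : ℝ) : EReal) + (a : EReal) * R (xt ε) :=
      hF ε hε1 hε2 (xt ε)
    have hεγ : (0 : ℝ) < ε ^ γ := Real.rpow_pos_of_pos hε1 γ
    have hDnn : (0 : ℝ) ≤ d ^ α / ε ^ γ :=
      div_nonneg (Real.rpow_nonneg dist_nonneg α) hεγ.le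
    constructor
    · apply aux_div a ha
      calc (a : EReal) * R (xt ε)
          ≤ ((d ^ α / ε ^ γ : ℝ) : EReal) + (a : EReal) * R (xt ε) :=
            le_add_of_nonneg_left (by exact_mod_cast hDnn)
        _ = F ε (xt ε) := hFx.symm
        _ ≤ ((mr + 1 : ℝ) : EReal) := hFlt.le
    · have hab : ((a * b : ℝ) : EReal) ≤ (a : EReal) * R (xt ε) := by
        rw [EReal.coe_mul]; exact aux_mul_le a ha (hbR _)
      have hDle : ((d ^ α / ε ^ γ : ℝ) : EReal) + ((a * b : ℝ) : EReal) ≤ ((mr + 1 : ℝ) : EReal) := by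
        calc ((d ^ α / ε ^ γ : ℝ) : EReal) + ((a * b : ℝ) : EReal)
            ≤ ((d ^ α / ε ^ γ : ℝ) : EReal) + (a : EReal) * R (xt ε) := add_le_add_right hab _
          _ = F ε (xt ε) := hFx.symm
          _ ≤ ((mr + 1 : ℝ) : EReal) := hFlt.le
      rw [← EReal.coe_add, EReal.coe_le_coe_iff] at hDle
      have hDM : d ^ α / ε ^ γ ≤ M := by rw [hMdef]; linarith
      have hdα : d ^ α ≤ M * ε ^ γ := by
        rw [div_le_iff₀ hεγ] at hDM; linarith
      have hdle : d ≤ (M * ε ^ γ) ^ (1 / α) := by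
        have h3 : (d ^ α) ^ (1 / α) ≤ (M * ε ^ γ) ^ (1 / α) :=
          Real.rpow_le_rpow (Real.rpow_nonneg dist_nonneg α) hdα (by positivity)
        rwa [← Real.rpow_mul dist_nonneg, mul_one_div, div_self hα.ne', Real.rpow_one] at h3
      calc dist (Λ (xt ε)) (Λ x0) ≤ d + dist (Λε ε) (Λ x0) := dist_triangle _ _ _
        _ ≤ (M * ε ^ γ) ^ (1 / α) + ε := add_le_add hdle (hΛε ε hε1 hε2)
  -- pass to the sequence
  have hseq : Tendsto εs atTop (𝓝[>] (0 : ℝ)) :=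
    tendsto_nhdsWithin_of_tendsto_nhds_of_eventually_within εs hεslim
      (Eventually.of_forall fun n => (hεs n).1)
  obtain ⟨N, hN⟩ := eventually_atTop.1 (hseq.eventually hkey)
  set C : ℝ := max ((mr + 1) / a) 1 with hCdef
  have hC : 0 < C := lt_of_lt_of_le one_pos (le_max_right _ _)
  set u : ℕ → X := fun n => xt (εs (n + N)) with hu
  have huK : ∀ n, u n ∈ {x : X | R x ≤ (C : EReal)} := by
    intro n
    have h5 := (hN (n + N) (Nat.le_add_left N n)).1
    exact h5.trans (EReal.coe_le_coe_iff.mpr (le_max_left _ _))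
  obtain ⟨xtlim, hxK, φ, hφ, hconv⟩ := (hRcompact C hC).tendsto_subseq huK
  set ψ : ℕ → ℕ := fun k => φ k + N with hψ
  have hψmono : StrictMono ψ := fun i j h => Nat.add_lt_add_right (hφ h) N
  have hconv' : Tendsto (fun k => xt (εs (ψ k))) atTop (𝓝 xtlim) := hconv
  have hεsψ : Tendsto (fun k => εs (ψ k)) atTop (𝓝[>] (0 : ℝ)) :=
    hseq.comp hψmono.tendsto_atTop
  -- Λ xtlim = Λ x0
  have hΛ1 : Tendsto (fun k => Λ (xt (εs (ψ k)))) atTop (𝓝 (Λ xtlim)) :=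
    (hΛ.tendsto xtlim).comp hconv'
  have hg0 : Tendsto (fun ε : ℝ => (M * ε ^ γ) ^ (1 / α) + ε) (𝓝[>] (0 : ℝ)) (𝓝 0) := by
    have h1 : Tendsto (fun ε : ℝ => M * ε ^ γ) (𝓝[>] (0 : ℝ)) (𝓝 0) := by
      have := (hrpow γ hγ).const_mul M
      simpa using this
    have h2 : ContinuousAt (fun x : ℝ => x ^ (1 / α)) 0 :=
      Real.continuousAt_rpow_const 0 (1 / α) (Or.inr (by positivity))
    have h3 := h2.tendsto.comp h1
    rw [Real.zero_rpow (ne_of_gt (by positivity : (0:ℝ) < 1 / α))] at h3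
    have hid : Tendsto (fun ε : ℝ => ε) (𝓝[>] (0 : ℝ)) (𝓝 0) :=
      (continuous_id.tendsto (0 : ℝ)).mono_left nhdsWithin_le_nhds
    simpa using h3.add hid
  have hΛ2 : Tendsto (fun k => Λ (xt (εs (ψ k)))) atTop (𝓝 (Λ x0)) := by
    rw [tendsto_iff_dist_tendsto_zero]
    refine squeeze_zero' (Eventually.of_forall fun k => dist_nonneg) ?_ (hg0.comp hεsψ)
    exact (hεsψ.eventually hkey).mono fun k hk => hk.2
  have hΛeq : Λ xtlim = Λ x0 := tendsto_nhds_unique hΛ1 hΛ2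
  -- a * R xtlim ≤ m
  have haR : (a : EReal) * R xtlim ≤ m := by
    rw [← EReal.ge_of_forall_gt_iff_ge]
    intro c hc
    have hca : a * (c / a) = c := by field_simp
    have hlt : ((c / a : ℝ) : EReal) < R xtlim := by
      by_contra hcon
      push_neg at hcon
      have h6 := aux_mul_le a ha hcon
      rw [← EReal.coe_mul, hca] at h6
      exact absurd hc (not_lt.mpr h6)
    have hev2 : ∀ᶠ k in atTop, ((c / a : ℝ) : EReal) < R (xt (εs (ψ k))) :=
      hconv'.eventually (hRlsc xtlim _ hlt)
    have hev3 : ∀ᶠ k in atTop, (c : EReal) ≤ F (εs (ψ k)) (xt (εs (ψ k))) := by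
      filter_upwards [hev2, hεsψ.eventually hIoc] with k hk hk2
      rw [hF _ hk2.1 hk2.2]
      have h1 : (c : EReal) ≤ (a : EReal) * R (xt (εs (ψ k))) := by
        have h7 := aux_mul_le a ha hk.le
        rwa [← EReal.coe_mul, hca] at h7
      refine h1.trans (le_add_of_nonneg_left ?_)
      exact_mod_cast div_nonneg (Real.rpow_nonneg dist_nonneg α) (Real.rpow_nonneg hk2.1.le γ)
    exact ge_of_tendsto (hxt.comp hεsψ) hev3
  have hRmin : ∀ x : X, Λ x = Λ x0 → R xtlim ≤ R x :=
    fun x hx => aux_cancel a ha (haR.trans (hm_le x hx))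
  have hF0 : ∀ x : X, F0 xtlim ≤ F0 x := by
    intro x
    rcases eq_or_ne (Λ x) (Λ x0) with hx | hx
    · rw [hF0eq _ hΛeq, hF0eq _ hx]
      exact aux_mul_le a ha (hRmin x hx)
    · rw [hF0top _ hx]; exact le_top
  exact ⟨ψ, hψmono, xtlim, hconv', hF0, hΛeq, hRmin⟩
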